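/- Let M, L, d̂ ≥ 1 be integers and fix U⁰ ∈ ℝ^M. Let S ∈ ℝ^{M × d̂M} admit a right inverse S⁺ ∈ ℝ^{d̂M × M} (i.e., S·S⁺ = I_M) such that ReLU(S⁺S·z) = S⁺S·ReLU(z) for all z ∈ ℝ^{d̂M}. Let B ∈ ℝ^{d̂M × 2M}, A ∈ ℝ^{d̂M}, and let D ∈ ℝ^{M × M} be any matrix. Then there exist a positive integer d_h, a lifting matrix P ∈ ℝ^{d_h·M × 2M}, an iterative-layer weight matrix V ∈ ℝ^{d_h × d_h} and bias vector C ∈ ℝ^{d_h·M}, and a projection matrix Q ∈ ℝ^{M × d_h·M}, such that for every G ∈ ℝ^M the network output Q · 𝒥^L(P·[U⁰; G]) equals V^L(G), where 𝒥(H) := H + (1/L)·ReLU((𝟙_{M×M} ⊗ V)·H + C) and the perturbed iteration is V^0(G) := U⁰, V^{l+1}(G) := V^l(G) + S·ReLU(B·[V^l(G); D·G] + A). -/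

import Mathlib

open scoped Kronecker

/-- The rectified linear unit applied componentwise. -/
def relu {n : Type*} (z : n → ℝ) : n → ℝ := fun i => max (z i) 0

/-- The all-ones `M × M` matrix `𝟙_{M×M}`. -/
def onesMat (M : ℕ) : Matrix (Fin M) (Fin M) ℝ := Matrix.of fun _ _ => (1 : ℝ)

section Aux

variable {M L dhat : ℕ}
variable (S : Matrix (Fin M) (Fin (dhat * M)) ℝ)
variable (Sp : Matrix (Fin (dhat * M)) (Fin M) ℝ)
variable (B : Matrix (Fin (dhat * M)) (Fin M ⊕ Fin M) ℝ)
variable (A : Fin (dhat * M) → ℝ)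
variable (D : Matrix (Fin M) (Fin M) ℝ)

/-- channel-space weight matrix -/
noncomputable def Vch (L : ℕ) : Matrix (Fin (dhat * M) ⊕ Fin M) (Fin (dhat * M) ⊕ Fin M) ℝ :=
  Matrix.fromBlocks
    (((L : ℝ) / (M : ℝ)) • (Sp * S * (B.submatrix id Sum.inl) * S))
    (((L : ℝ) / (M : ℝ)) • (Sp * S * (B.submatrix id Sum.inr)))
    0 0

/-- channel-space bias -/
noncomputable def Cch (L : ℕ) : (Fin (dhat * M) ⊕ Fin M) → ℝ :=
  Sum.elim (((L : ℝ) / (M : ℝ)) • ((Sp * S).mulVec A)) 0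

/-- channel-space invariant state after `l` steps -/
noncomputable def psiSt (U0 G : Fin M → ℝ) (l : ℕ) : (Fin (dhat * M) ⊕ Fin M) → ℝ :=
  Sum.elim
    ((M : ℝ)⁻¹ • Sp.mulVec
      ((fun Vv : Fin M → ℝ =>
          Vv + S.mulVec (relu (B.mulVec (Sum.elim Vv (D.mulVec G)) + A)))^[l] U0))
    ((M : ℝ)⁻¹ • D.mulVec G)

lemma mulVec_sum_split (x y : Fin M → ℝ) :
    B.mulVec (Sum.elim x y)
      = (B.submatrix id Sum.inl).mulVec x + (B.submatrix id Sum.inr).mulVec y := by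
  funext r
  simp [Matrix.mulVec, dotProduct, Fintype.sum_sum_type]

lemma mulVec_smul' {m n : Type*} [Fintype n] (A' : Matrix m n ℝ) (c : ℝ) (x : n → ℝ) :
    A'.mulVec (c • x) = c • A'.mulVec x := by
  funext r
  simp [Matrix.mulVec, dotProduct, Finset.mul_sum, mul_left_comm]

/-- the key channel-level step identity -/
lemma psi_step (hM : 1 ≤ M) (hL : 1 ≤ L)
    (hRightInv : S * Sp = 1)
    (hReluComm : ∀ z : Fin (dhat * M) → ℝ,
      relu ((Sp * S).mulVec z) = (Sp * S).mulVec (relu z))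
    (U0 G : Fin M → ℝ) (l : ℕ) (k : Fin (dhat * M) ⊕ Fin M) :
    psiSt S Sp B A D U0 G l k
      + (L : ℝ)⁻¹ * max ((M : ℝ) * (Vch S Sp B L).mulVec (psiSt S Sp B A D U0 G l) k
          + Cch S Sp A L k) 0
      = psiSt S Sp B A D U0 G (l + 1) k := by
  have hM0 : (0 : ℝ) < M := by exact_mod_cast hM
  have hL0 : (0 : ℝ) < L := by exact_mod_cast hL
  set F := fun Vv : Fin M → ℝ =>
    Vv + S.mulVec (relu (B.mulVec (Sum.elim Vv (D.mulVec G)) + A)) with hF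
  set Vl := F^[l] U0 with hVl
  set z := B.mulVec (Sum.elim Vl (D.mulVec G)) + A with hz
  have key1 : (Sp * S * (B.submatrix id Sum.inl) * S).mulVec (Sp.mulVec Vl)
      = (Sp * S).mulVec ((B.submatrix id Sum.inl).mulVec Vl) := by
    rw [Matrix.mulVec_mulVec, Matrix.mul_assoc (Sp * S * B.submatrix id Sum.inl),
      hRightInv, Matrix.mul_one]
    simp [Matrix.mulVec_mulVec, Matrix.mul_assoc]
  have key2 : (Sp * S * (B.submatrix id Sum.inr)).mulVec (D.mulVec G)
      = (Sp * S).mulVec ((B.submatrix id Sum.inr).mulVec (D.mulVec G)) := by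
    simp [Matrix.mulVec_mulVec, Matrix.mul_assoc]
  have hzA : z - A = (B.submatrix id Sum.inl).mulVec Vl
      + (B.submatrix id Sum.inr).mulVec (D.mulVec G) := by
    rw [hz, mulVec_sum_split]; abel
  have hmv : (Vch S Sp B L).mulVec (psiSt S Sp B A D U0 G l)
      = Sum.elim
        ((((L:ℝ)/(M:ℝ)) * (M:ℝ)⁻¹) • ((Sp * S).mulVec (z - A))) 0 := by
    have h1 : (psiSt S Sp B A D U0 G l) ∘ Sum.inl
        = (M : ℝ)⁻¹ • Sp.mulVec Vl := rfl
    have h2 : (psiSt S Sp B A D U0 G l) ∘ Sum.inr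
        = (M : ℝ)⁻¹ • D.mulVec G := rfl
    rw [Vch, Matrix.fromBlocks_mulVec, h1, h2]
    rw [Matrix.smul_mulVec, Matrix.smul_mulVec,
      mulVec_smul', mulVec_smul', key1, key2, hzA, Matrix.mulVec_add]
    simp [smul_smul, smul_add, Matrix.zero_mulVec]
  cases k with
  | inr k =>
    rw [hmv]
    simp [Cch, psiSt]
  | inl a =>
    have hw : (M:ℝ) * (Vch S Sp B L).mulVec (psiSt S Sp B A D U0 G l) (Sum.inl a)
        + Cch S Sp A L (Sum.inl a)
        = ((L:ℝ)/(M:ℝ)) * ((Sp * S).mulVec z a) := by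
      rw [hmv]
      simp only [Sum.elim_inl, Pi.smul_apply, smul_eq_mul, Cch]
      have : (Sp * S).mulVec z = (Sp * S).mulVec (z - A) + (Sp * S).mulVec A := by
        rw [← Matrix.mulVec_add]; ring_nf
      rw [this, Pi.add_apply]
      field_simp
    rw [hw]
    have hc0 : (0:ℝ) ≤ (L:ℝ)/(M:ℝ) := le_of_lt (div_pos hL0 hM0)
    rw [show max (((L:ℝ)/(M:ℝ)) * ((Sp * S).mulVec z a)) 0
        = ((L:ℝ)/(M:ℝ)) * max ((Sp * S).mulVec z a) 0 by
      rw [mul_max_of_nonneg _ _ hc0, mul_zero]]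
    have hrc : max ((Sp * S).mulVec z a) 0 = (Sp * S).mulVec (relu z) a := by
      have := congrFun (hReluComm z) a
      simpa [relu] using this
    rw [hrc]
    have hiter : F^[l+1] U0 = Vl + S.mulVec (relu z) := by
      rw [Function.iterate_succ_apply', ← hVl, hF]
    simp only [psiSt, Sum.elim_inl, ← hF, ← hVl, hiter, Pi.smul_apply, smul_eq_mul]
    rw [Matrix.mulVec_add, Matrix.mulVec_mulVec]
    simp only [Pi.add_apply]
    field_simp

/-- lifting matrix -/
noncomputable def Pmat : Matrix (Fin M × Fin (dhat * M + M)) (Fin M ⊕ Fin M) ℝ :=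
  fun p => Sum.elim
    (fun a => Sum.elim (fun m => (M : ℝ)⁻¹ * Sp a m) (fun _ => 0))
    (fun k => Sum.elim (fun _ => 0) (fun m => (M : ℝ)⁻¹ * D k m))
    (finSumFinEquiv.symm p.2)

/-- projection matrix -/
def Qmat : Matrix (Fin M) (Fin M × Fin (dhat * M + M)) ℝ :=
  fun i p => Sum.elim (fun a => S i a) (fun _ => 0) (finSumFinEquiv.symm p.2)

lemma base_case (U0 G : Fin M → ℝ) :
    (Pmat Sp D).mulVec (Sum.elim U0 G)
      = fun p : Fin M × Fin (dhat * M + M) =>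
          psiSt S Sp B A D U0 G 0 (finSumFinEquiv.symm p.2) := by
  funext p
  rcases hc : finSumFinEquiv.symm p.2 with a | k
  · simp [Pmat, psiSt, hc, Matrix.mulVec, dotProduct, Fintype.sum_sum_type,
      Finset.mul_sum, mul_assoc]
  · simp [Pmat, psiSt, hc, Matrix.mulVec, dotProduct, Fintype.sum_sum_type,
      Finset.mul_sum, mul_assoc]

lemma kron_mulVec (L : ℕ) (ψ : Fin (dhat * M) ⊕ Fin M → ℝ) (i : Fin M)
    (c : Fin (dhat * M + M)) :
    ((onesMat M ⊗ₖ ((Vch S Sp B L).submatrix finSumFinEquiv.symm finSumFinEquiv.symm)).mulVec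
      (fun p : Fin M × Fin (dhat * M + M) => ψ (finSumFinEquiv.symm p.2))) (i, c)
    = (M : ℝ) * (Vch S Sp B L).mulVec ψ (finSumFinEquiv.symm c) := by
  simp only [Matrix.mulVec, dotProduct, Fintype.sum_prod_type,
    Matrix.kroneckerMap_apply, onesMat, Matrix.of_apply, one_mul, Matrix.submatrix_apply]
  have inner : ∀ _j : Fin M,
      ∑ b : Fin (dhat * M + M),
        Vch S Sp B L (finSumFinEquiv.symm c) (finSumFinEquiv.symm b)
          * ψ (finSumFinEquiv.symm b)
      = (Vch S Sp B L).mulVec ψ (finSumFinEquiv.symm c) := fun _ =>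
    Equiv.sum_comp finSumFinEquiv.symm
      (fun k => Vch S Sp B L (finSumFinEquiv.symm c) k * ψ k)
  rw [Finset.sum_congr rfl (fun j _ => inner j), Finset.sum_const, Finset.card_univ,
    Fintype.card_fin, nsmul_eq_mul]
  simp [Matrix.mulVec, dotProduct]

lemma invariant (hM : 1 ≤ M) (hL : 1 ≤ L)
    (hRightInv : S * Sp = 1)
    (hReluComm : ∀ z : Fin (dhat * M) → ℝ,
      relu ((Sp * S).mulVec z) = (Sp * S).mulVec (relu z))
    (U0 G : Fin M → ℝ) : ∀ l : ℕ,
    ((fun Hv : Fin M × Fin (dhat * M + M) → ℝ =>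
        Hv + (L : ℝ)⁻¹ • relu
          ((onesMat M ⊗ₖ ((Vch S Sp B L).submatrix finSumFinEquiv.symm finSumFinEquiv.symm)).mulVec Hv
            + fun p => Cch S Sp A L (finSumFinEquiv.symm p.2)))^[l]
      ((Pmat Sp D).mulVec (Sum.elim U0 G)))
    = fun p : Fin M × Fin (dhat * M + M) =>
        psiSt S Sp B A D U0 G l (finSumFinEquiv.symm p.2) := by
  intro l
  induction l with
  | zero => simpa using base_case S Sp B A D U0 G
  | succ l ih =>
    rw [Function.iterate_succ_apply', ih]
    funext p
    obtain ⟨i, c⟩ := p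
    simp only [Pi.add_apply, Pi.smul_apply, relu, smul_eq_mul]
    rw [kron_mulVec S Sp B L]
    exact psi_step S Sp B A D hM hL hRightInv hReluComm U0 G l (finSumFinEquiv.symm c)

lemma final_proj (hM : 1 ≤ M) (hRightInv : S * Sp = 1) (U0 G : Fin M → ℝ) (l : ℕ) :
    (Qmat S).mulVec
      (fun p : Fin M × Fin (dhat * M + M) =>
        psiSt S Sp B A D U0 G l (finSumFinEquiv.symm p.2))
    = (fun Vv : Fin M → ℝ =>
        Vv + S.mulVec (relu (B.mulVec (Sum.elim Vv (D.mulVec G)) + A)))^[l] U0 := by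
  have hM0 : (0 : ℝ) < M := by exact_mod_cast hM
  set W := (fun Vv : Fin M → ℝ =>
      Vv + S.mulVec (relu (B.mulVec (Sum.elim Vv (D.mulVec G)) + A)))^[l] U0 with hW
  funext i
  simp only [Matrix.mulVec, dotProduct, Fintype.sum_prod_type, Qmat]
  have inner : ∀ _j : Fin M,
      ∑ c : Fin (dhat * M + M),
        Sum.elim (fun a => S i a) (fun _ => 0) (finSumFinEquiv.symm c)
          * psiSt S Sp B A D U0 G l (finSumFinEquiv.symm c)
      = (M : ℝ)⁻¹ * ((S * Sp).mulVec W i) := by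
    intro _j
    rw [Equiv.sum_comp finSumFinEquiv.symm
      (fun k => Sum.elim (fun a => S i a) (fun _ => 0) k * psiSt S Sp B A D U0 G l k)]
    rw [Fintype.sum_sum_type]
    simp only [Sum.elim_inl, Sum.elim_inr, zero_mul, Finset.sum_const_zero, add_zero,
      psiSt, Pi.smul_apply, smul_eq_mul, ← hW]
    rw [← Matrix.mulVec_mulVec]
    simp only [Matrix.mulVec, dotProduct, Finset.mul_sum]
    exact Finset.sum_congr rfl fun a _ => Finset.sum_congr rfl fun x _ => by ring
  rw [Finset.sum_congr rfl (fun j _ => inner j), Finset.sum_const, Finset.card_univ,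
    Fintype.card_fin, nsmul_eq_mul, hRightInv, Matrix.one_mulVec]
  field_simp

end Aux


/-- Constructive core of the paper's Theorem 1: an `L`-layer integral neural operator with
lifting matrix `P`, shared residual iterative layers `H ↦ H + (1/L)·ReLU((𝟙_{M×M} ⊗ V)·H + C)`,
and linear projection `Q` exactly reproduces `L` steps of the perturbed fixed-point
iteration `V^{l+1} = V^l + S·ReLU(B·[V^l; D·G] + A)` driven by a shallow ReLU network
`(S, B, A)` and the task-dependent reparameterization `G ↦ D·G`. Hidden vectors in
`ℝ^{d_h·M}` are indexed by `Fin M × Fin d_h` (grid point, channel); inputs in `ℝ^{2M}` are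
indexed by `Fin M ⊕ Fin M`, with `[x; y] = Sum.elim x y`. -/
theorem metaNO_layers_reproduce_perturbed_iteration
    (M L dhat : ℕ) (hM : 1 ≤ M) (hL : 1 ≤ L) (hdhat : 1 ≤ dhat)
    (U0 : Fin M → ℝ)
    (S : Matrix (Fin M) (Fin (dhat * M)) ℝ)
    (Sp : Matrix (Fin (dhat * M)) (Fin M) ℝ)
    (hRightInv : S * Sp = 1)
    (hReluComm : ∀ z : Fin (dhat * M) → ℝ,
      relu ((Sp * S).mulVec z) = (Sp * S).mulVec (relu z))
    (B : Matrix (Fin (dhat * M)) (Fin M ⊕ Fin M) ℝ)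
    (A : Fin (dhat * M) → ℝ)
    (D : Matrix (Fin M) (Fin M) ℝ) :
    ∃ (dh : ℕ), 0 < dh ∧
      ∃ (P : Matrix (Fin M × Fin dh) (Fin M ⊕ Fin M) ℝ)
        (V : Matrix (Fin dh) (Fin dh) ℝ)
        (C : Fin M × Fin dh → ℝ)
        (Q : Matrix (Fin M) (Fin M × Fin dh) ℝ),
        ∀ G : Fin M → ℝ,
          Q.mulVec
            ((fun Hv : Fin M × Fin dh → ℝ =>
                Hv + (L : ℝ)⁻¹ • relu ((onesMat M ⊗ₖ V).mulVec Hv + C))^[L]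
              (P.mulVec (Sum.elim U0 G)))
            =
          (fun Vv : Fin M → ℝ =>
              Vv + S.mulVec (relu (B.mulVec (Sum.elim Vv (D.mulVec G)) + A)))^[L] U0 := by
  refine ⟨dhat * M + M, Nat.lt_of_lt_of_le hM (Nat.le_add_left M (dhat * M)),
    Pmat Sp D,
    (Vch S Sp B L).submatrix finSumFinEquiv.symm finSumFinEquiv.symm,
    (fun p => Cch S Sp A L (finSumFinEquiv.symm p.2)),
    Qmat S, ?_⟩
  intro G
  rw [invariant S Sp B A D hM hL hRightInv hReluComm U0 G L]
  exact final_proj S Sp B A D hM hRightInv U0 G L
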